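/- (Gaussian sum-rate decomposition) Under the long Markov chain U_1–Y_1–X–Y_2–U_2, I(U_1,U_2;Y_1,Y_2) = I(U_1,U_2;X) + I(U_1;Y_1|X) + I(U_2;Y_2|X). -/
import Mathlib


open Real Finset

/-- Probability that the random variable `X` takes value `a`, under pmf `p` on `Ω`. -/
noncomputable def distOf {Ω A : Type*} [Fintype Ω] [DecidableEq A] (p : Ω → ℝ) (X : Ω → A)
    (a : A) : ℝ :=
  ∑ ω ∈ Finset.univ.filter (fun ω => X ω = a), p ω

/-- Shannon entropy (natural log) of a discrete random variable. -/
noncomputable def Hd {Ω A : Type*} [Fintype Ω] [Fintype A] [DecidableEq A]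
    (p : Ω → ℝ) (X : Ω → A) : ℝ :=
  -∑ a : A, distOf p X a * Real.log (distOf p X a)

/-- Conditional entropy H(X|Y). -/
noncomputable def CHd {Ω A B : Type*} [Fintype Ω] [Fintype A] [DecidableEq A]
    [Fintype B] [DecidableEq B] (p : Ω → ℝ) (X : Ω → A) (Y : Ω → B) : ℝ :=
  Hd p (fun ω => (X ω, Y ω)) - Hd p Y

/-- Mutual information I(X;Y). -/
noncomputable def MId {Ω A B : Type*} [Fintype Ω] [Fintype A] [DecidableEq A]
    [Fintype B] [DecidableEq B] (p : Ω → ℝ) (X : Ω → A) (Y : Ω → B) : ℝ :=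
  Hd p X + Hd p Y - Hd p (fun ω => (X ω, Y ω))

/-- Conditional mutual information I(X;Y|Z). -/
noncomputable def CMId {Ω A B C : Type*} [Fintype Ω] [Fintype A] [DecidableEq A]
    [Fintype B] [DecidableEq B] [Fintype C] [DecidableEq C]
    (p : Ω → ℝ) (X : Ω → A) (Y : Ω → B) (Z : Ω → C) : ℝ :=
  Hd p (fun ω => (X ω, Z ω)) + Hd p (fun ω => (Y ω, Z ω))
    - Hd p (fun ω => (X ω, Y ω, Z ω)) - Hd p Z

section Helpers
open Real
variable {Ω : Type*} [Fintype Ω]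

theorem distOf_nonneg {A : Type*} [DecidableEq A] {p : Ω → ℝ} (hp : ∀ ω, 0 ≤ p ω)
    (X : Ω → A) (a : A) : 0 ≤ distOf p X a :=
  Finset.sum_nonneg fun ω _ => hp ω

theorem sum_distOf {A : Type*} [Fintype A] [DecidableEq A] (p : Ω → ℝ) (X : Ω → A) :
    ∑ a : A, distOf p X a = ∑ ω, p ω :=
  Finset.sum_fiberwise Finset.univ X p

theorem distOf_comp {A A' : Type*} [Fintype A] [DecidableEq A] [DecidableEq A']
    (p : Ω → ℝ) (X : Ω → A) (g : A → A') (a' : A') :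
    distOf p (fun ω => g (X ω)) a'
      = ∑ a ∈ Finset.univ.filter (fun a => g a = a'), distOf p X a := by
  simp only [distOf]
  rw [← Finset.sum_fiberwise (Finset.univ.filter (fun ω => g (X ω) = a')) X p,
    Finset.sum_filter]
  refine Finset.sum_congr rfl fun a _ => ?_
  rw [Finset.filter_filter]
  by_cases h : g a = a'
  · rw [if_pos h]
    congr 1
    ext ω
    simp only [Finset.mem_filter, Finset.mem_univ, true_and]
    constructor
    · exact fun hh => hh.2
    · intro hh
      exact ⟨by rw [hh, h], hh⟩
  · rw [if_neg h, Finset.filter_false_of_mem, Finset.sum_empty]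
    intro ω _
    rintro ⟨h1, h2⟩
    exact h (by rw [← h2]; exact h1)

theorem distOf_le_comp {A A' : Type*} [Fintype A] [DecidableEq A] [DecidableEq A']
    {p : Ω → ℝ} (hp : ∀ ω, 0 ≤ p ω) (X : Ω → A) (g : A → A') (a : A) :
    distOf p X a ≤ distOf p (fun ω => g (X ω)) (g a) := by
  classical
  rw [distOf_comp p X g (g a)]
  exact Finset.single_le_sum (fun i _ => distOf_nonneg hp X i)
    (Finset.mem_filter.2 ⟨Finset.mem_univ a, rfl⟩)

theorem distOf_comp_inj {A A' : Type*} [Fintype A] [DecidableEq A] [DecidableEq A']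
    (p : Ω → ℝ) (X : Ω → A) {f : A → A'} (hf : Function.Injective f) (a : A) :
    distOf p (fun ω => f (X ω)) (f a) = distOf p X a := by
  classical
  simp only [distOf]
  refine Finset.sum_congr ?_ fun _ _ => rfl
  apply Finset.filter_congr
  intro ω _
  exact hf.eq_iff

theorem Hd_comp {A A' : Type*} [Fintype A] [DecidableEq A] [Fintype A'] [DecidableEq A']
    (p : Ω → ℝ) (X : Ω → A) (f : A → A') (hf : Function.Injective f) :
    Hd p (fun ω => f (X ω)) = Hd p X := by
  simp only [Hd]
  congr 1
  have key : ∀ a' ∈ Finset.univ, a' ∉ Finset.univ.image f →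
      distOf p (fun ω => f (X ω)) a' * Real.log (distOf p (fun ω => f (X ω)) a') = 0 := by
    intro a' _ ha'
    have : distOf p (fun ω => f (X ω)) a' = 0 := by
      simp only [distOf]
      rw [Finset.filter_false_of_mem, Finset.sum_empty]
      intro ω _ h
      exact ha' (Finset.mem_image.2 ⟨X ω, Finset.mem_univ _, h⟩)
    rw [this, zero_mul]
  rw [← Finset.sum_subset (Finset.subset_univ (Finset.univ.image f)) key,
    Finset.sum_image (fun x _ y _ h => hf h)]
  exact Finset.sum_congr rfl fun a _ => by rw [distOf_comp_inj p X hf a]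

theorem Hd_comp_eq_sum {A A' : Type*} [Fintype A] [DecidableEq A] [Fintype A'] [DecidableEq A']
    (p : Ω → ℝ) (X : Ω → A) (g : A → A') :
    Hd p (fun ω => g (X ω))
      = -∑ a : A, distOf p X a * Real.log (distOf p (fun ω => g (X ω)) (g a)) := by
  have key : ∑ a : A, distOf p X a * Real.log (distOf p (fun ω => g (X ω)) (g a))
      = ∑ a' : A', distOf p (fun ω => g (X ω)) a' *
          Real.log (distOf p (fun ω => g (X ω)) a') := by
    rw [← Finset.sum_fiberwise Finset.univ g
      (fun a => distOf p X a * Real.log (distOf p (fun ω => g (X ω)) (g a)))]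
    refine Finset.sum_congr rfl fun a' _ => ?_
    rw [show (∑ a ∈ Finset.univ.filter (fun a => g a = a'),
          distOf p X a * Real.log (distOf p (fun ω => g (X ω)) (g a)))
        = ∑ a ∈ Finset.univ.filter (fun a => g a = a'),
          distOf p X a * Real.log (distOf p (fun ω => g (X ω)) a') from
      Finset.sum_congr rfl fun a ha => by rw [(Finset.mem_filter.1 ha).2]]
    rw [← Finset.sum_mul, ← distOf_comp p X g a']
  simp only [Hd]
  rw [key]

end Helpers

section Nonneg
open Real
variable {Ω : Type*} [Fintype Ω]

theorem sum_filter_snd {A C : Type*} [Fintype A] [Fintype C] [DecidableEq C]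
    (f : A × C → ℝ) (c : C) :
    ∑ t ∈ Finset.univ.filter (fun t : A × C => t.2 = c), f t = ∑ a : A, f (a, c) := by
  rw [Finset.sum_filter, Fintype.sum_prod_type]
  simp

theorem distOf_snd {A C : Type*} [Fintype A] [DecidableEq A] [Fintype C] [DecidableEq C]
    (p : Ω → ℝ) (XZ : Ω → A × C) (c : C) :
    distOf p (fun ω => (XZ ω).2) c = ∑ a : A, distOf p XZ (a, c) := by
  rw [distOf_comp p XZ Prod.snd c]
  exact sum_filter_snd _ c

theorem sum_prod3 {A B C : Type*} [Fintype A] [Fintype B] [Fintype C] (f : A × B × C → ℝ) :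
    ∑ t : A × B × C, f t = ∑ c : C, ∑ b : B, ∑ a : A, f (a, b, c) := by
  rw [Fintype.sum_prod_type, Finset.sum_comm, Fintype.sum_prod_type, Finset.sum_comm]

theorem CMId_nonneg {A B C : Type*} [Fintype A] [DecidableEq A] [Fintype B] [DecidableEq B]
    [Fintype C] [DecidableEq C]
    (p : Ω → ℝ) (hp : ∀ ω, 0 ≤ p ω) (hp1 : ∑ ω, p ω = 1)
    (X : Ω → A) (Y : Ω → B) (Z : Ω → C) : 0 ≤ CMId p X Y Z := by
  classical
  -- notation
  have e1 : Hd p (fun ω => (X ω, Z ω)) = -∑ t : A × B × C,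
      distOf p (fun ω => (X ω, Y ω, Z ω)) t *
        Real.log (distOf p (fun ω => (X ω, Z ω)) (t.1, t.2.2)) :=
    Hd_comp_eq_sum p (fun ω => (X ω, Y ω, Z ω)) (fun t => (t.1, t.2.2))
  have e2 : Hd p (fun ω => (Y ω, Z ω)) = -∑ t : A × B × C,
      distOf p (fun ω => (X ω, Y ω, Z ω)) t *
        Real.log (distOf p (fun ω => (Y ω, Z ω)) (t.2.1, t.2.2)) :=
    Hd_comp_eq_sum p (fun ω => (X ω, Y ω, Z ω)) (fun t => (t.2.1, t.2.2))
  have e4 : Hd p Z = -∑ t : A × B × C,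
      distOf p (fun ω => (X ω, Y ω, Z ω)) t * Real.log (distOf p Z t.2.2) :=
    Hd_comp_eq_sum p (fun ω => (X ω, Y ω, Z ω)) (fun t => t.2.2)
  set q : A × B × C → ℝ := distOf p (fun ω => (X ω, Y ω, Z ω)) with hqdef
  set qxz : A × C → ℝ := distOf p (fun ω => (X ω, Z ω)) with hxzdef
  set qyz : B × C → ℝ := distOf p (fun ω => (Y ω, Z ω)) with hyzdef
  set qz : C → ℝ := distOf p Z with hzdef
  have hq0 : ∀ t, 0 ≤ q t := fun t => distOf_nonneg hp _ t
  have hxz0 : ∀ t, 0 ≤ qxz t := fun t => distOf_nonneg hp _ t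
  have hyz0 : ∀ t, 0 ≤ qyz t := fun t => distOf_nonneg hp _ t
  have hz0 : ∀ c, 0 ≤ qz c := fun c => distOf_nonneg hp _ c
  have hqle1 : ∀ t : A × B × C, q t ≤ qxz (t.1, t.2.2) := fun t =>
    distOf_le_comp hp (fun ω => (X ω, Y ω, Z ω)) (fun t => (t.1, t.2.2)) t
  have hqle2 : ∀ t : A × B × C, q t ≤ qyz (t.2.1, t.2.2) := fun t =>
    distOf_le_comp hp (fun ω => (X ω, Y ω, Z ω)) (fun t => (t.2.1, t.2.2)) t
  have hxzlez : ∀ t : A × C, qxz t ≤ qz t.2 := fun t =>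
    distOf_le_comp hp (fun ω => (X ω, Z ω)) Prod.snd t
  -- the expression as a single sum
  have hsum : CMId p X Y Z = ∑ t : A × B × C,
      (q t * Real.log (q t) + q t * Real.log (qz t.2.2)
        - q t * Real.log (qxz (t.1, t.2.2)) - q t * Real.log (qyz (t.2.1, t.2.2))) := by
    rw [CMId, e1, e2, e4, Hd]
    rw [Finset.sum_sub_distrib, Finset.sum_sub_distrib, Finset.sum_add_distrib]
    ring
  -- pointwise lower bound
  set b : A × B × C → ℝ := fun t => if qz t.2.2 = 0 then 0
    else qxz (t.1, t.2.2) * qyz (t.2.1, t.2.2) / qz t.2.2 with hbdef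
  have hb0 : ∀ t, 0 ≤ b t := by
    intro t
    simp only [hbdef]
    split
    · exact le_refl 0
    · exact div_nonneg (mul_nonneg (hxz0 _) (hyz0 _)) (hz0 _)
  have key : ∀ t : A × B × C, q t - b t ≤
      q t * Real.log (q t) + q t * Real.log (qz t.2.2)
        - q t * Real.log (qxz (t.1, t.2.2)) - q t * Real.log (qyz (t.2.1, t.2.2)) := by
    intro t
    rcases eq_or_lt_of_le (hq0 t) with h | h
    · rw [← h]
      simp only [zero_mul, zero_sub, sub_zero, add_zero, zero_add]
      simpa using hb0 t
    · have hxz : 0 < qxz (t.1, t.2.2) := lt_of_lt_of_le h (hqle1 t)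
      have hyz : 0 < qyz (t.2.1, t.2.2) := lt_of_lt_of_le h (hqle2 t)
      have hz : 0 < qz t.2.2 := lt_of_lt_of_le hxz (hxzlez (t.1, t.2.2))
      have hbt : b t = qxz (t.1, t.2.2) * qyz (t.2.1, t.2.2) / qz t.2.2 := by
        simp only [hbdef]
        rw [if_neg hz.ne']
      have hbpos : 0 < b t := by
        rw [hbt]; positivity
      have hlog : Real.log (b t / q t) ≤ b t / q t - 1 :=
        Real.log_le_sub_one_of_pos (div_pos hbpos h)
      have hlogb : Real.log (b t) = Real.log (qxz (t.1, t.2.2)) + Real.log (qyz (t.2.1, t.2.2))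
          - Real.log (qz t.2.2) := by
        rw [hbt, Real.log_div (by positivity) hz.ne', Real.log_mul hxz.ne' hyz.ne']
      rw [Real.log_div hbpos.ne' h.ne'] at hlog
      have h2 : q t * (Real.log (b t) - Real.log (q t)) ≤ b t - q t := by
        calc q t * (Real.log (b t) - Real.log (q t))
            ≤ q t * (b t / q t - 1) := mul_le_mul_of_nonneg_left hlog h.le
          _ = b t - q t := by field_simp
      have h4 : q t * Real.log (b t) = q t * Real.log (qxz (t.1, t.2.2))
          + q t * Real.log (qyz (t.2.1, t.2.2)) - q t * Real.log (qz t.2.2) := by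
        rw [hlogb]; ring
      rw [mul_sub] at h2
      linarith [h2, h4]
  -- sum of b is at most 1
  have hmargx : ∀ c : C, ∑ a : A, qxz (a, c) = qz c := fun c =>
    (distOf_snd p (fun ω => (X ω, Z ω)) c).symm
  have hmargy : ∀ c : C, ∑ b' : B, qyz (b', c) = qz c := fun c =>
    (distOf_snd p (fun ω => (Y ω, Z ω)) c).symm
  have hple : ∀ c : C, (∑ b' : B, ∑ a : A, b (a, b', c)) ≤ qz c := by
    intro c
    by_cases hc : qz c = 0
    · have hz : ∀ b' : B, ∀ a : A, b (a, b', c) = 0 := by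
        intro b' a
        simp only [hbdef]
        rw [if_pos hc]
      calc (∑ b' : B, ∑ a : A, b (a, b', c))
          = ∑ b' : B, ∑ a : A, (0 : ℝ) := by
            refine Finset.sum_congr rfl fun b' _ => Finset.sum_congr rfl fun a _ => hz b' a
        _ = 0 := by simp
        _ ≤ qz c := hz0 c
    · have h1 : ∀ b' : B, ∑ a : A, b (a, b', c) = qyz (b', c) := by
        intro b'
        have hterm : ∀ a : A, b (a, b', c) = qxz (a, c) * (qyz (b', c) / qz c) := by
          intro a
          simp only [hbdef]
          rw [if_neg hc]
          ring
        rw [Finset.sum_congr rfl fun a _ => hterm a, ← Finset.sum_mul, hmargx c,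
          mul_comm, div_mul_cancel₀ _ hc]
      rw [Finset.sum_congr rfl fun b' _ => h1 b', hmargy c]
  have hbsum : ∑ t : A × B × C, b t ≤ 1 := by
    rw [sum_prod3]
    have : ∑ c : C, qz c = 1 := by rw [hzdef, sum_distOf]; exact hp1
    calc (∑ c : C, ∑ b' : B, ∑ a : A, b (a, b', c))
        ≤ ∑ c : C, qz c := Finset.sum_le_sum fun c _ => hple c
      _ = 1 := this
  have hqsum : ∑ t : A × B × C, q t = 1 := by rw [hqdef, sum_distOf]; exact hp1
  have hfin : ∑ t : A × B × C, (q t - b t) ≤ CMId p X Y Z := by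
    rw [hsum]
    exact Finset.sum_le_sum fun t _ => key t
  rw [Finset.sum_sub_distrib, hqsum] at hfin
  linarith [hbsum]

end Nonneg

theorem stmt15 {Ω A B C D E : Type*} [Fintype Ω]
    [Fintype A] [DecidableEq A] [Fintype B] [DecidableEq B] [Fintype C] [DecidableEq C]
    [Fintype D] [DecidableEq D] [Fintype E] [DecidableEq E]
    (p : Ω → ℝ) (hp : ∀ ω, 0 ≤ p ω) (hp1 : ∑ ω, p ω = 1)
    (U1 : Ω → A) (Y1 : Ω → B) (X : Ω → C) (Y2 : Ω → D) (U2 : Ω → E)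
    -- long Markov chain U1 - Y1 - X - Y2 - U2,
    -- i.e. joint law p(x) p(y1|x) p(y2|x) p(u1|y1) p(u2|y2):
    (hM1 : CMId p Y2 Y1 X = 0)
    (hM2 : CMId p U1 (fun ω => (X ω, Y2 ω)) Y1 = 0)
    (hM3 : CMId p U2 (fun ω => (X ω, Y1 ω, U1 ω)) Y2 = 0) :
    MId p (fun ω => (U1 ω, U2 ω)) (fun ω => (Y1 ω, Y2 ω))
      = MId p (fun ω => (U1 ω, U2 ω)) X + CMId p U1 Y1 X + CMId p U2 Y2 X := by
  simp only [MId, CMId] at hM1 hM2 hM3 ⊢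
  have e1 : (Hd p fun ω => (Y2 ω, X ω)) = Hd p fun ω => (X ω, Y2 ω) :=
    Hd_comp p (fun ω => (X ω, Y2 ω)) (fun t => (t.2, t.1))
      (by intro t t' h
          simp only [Prod.mk.injEq] at h
          simp only [Prod.ext_iff]
          tauto)
  have e2 : (Hd p fun ω => (Y1 ω, X ω)) = Hd p fun ω => (X ω, Y1 ω) :=
    Hd_comp p (fun ω => (X ω, Y1 ω)) (fun t => (t.2, t.1))
      (by intro t t' h
          simp only [Prod.mk.injEq] at h
          simp only [Prod.ext_iff]
          tauto)
  have e3 : (Hd p fun ω => (Y2 ω, (Y1 ω, X ω))) = Hd p fun ω => (X ω, (Y1 ω, Y2 ω)) :=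
    Hd_comp p (fun ω => (X ω, (Y1 ω, Y2 ω))) (fun t => (t.2.2, (t.2.1, t.1)))
      (by intro t t' h
          simp only [Prod.mk.injEq] at h
          simp only [Prod.ext_iff]
          tauto)
  have e4 : (Hd p fun ω => ((X ω, Y2 ω), Y1 ω)) = Hd p fun ω => (X ω, (Y1 ω, Y2 ω)) :=
    Hd_comp p (fun ω => (X ω, (Y1 ω, Y2 ω))) (fun t => ((t.1, t.2.2), t.2.1))
      (by intro t t' h
          simp only [Prod.mk.injEq] at h
          simp only [Prod.ext_iff]
          tauto)
  have e5 : (Hd p fun ω => (U1 ω, ((X ω, Y2 ω), Y1 ω))) = Hd p fun ω => (U1 ω, (X ω, (Y1 ω, Y2 ω))) :=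
    Hd_comp p (fun ω => (U1 ω, (X ω, (Y1 ω, Y2 ω)))) (fun t => (t.1, ((t.2.1, t.2.2.2), t.2.2.1)))
      (by intro t t' h
          simp only [Prod.mk.injEq] at h
          simp only [Prod.ext_iff]
          tauto)
  have e6 : (Hd p fun ω => ((X ω, (Y1 ω, U1 ω)), Y2 ω)) = Hd p fun ω => (U1 ω, (X ω, (Y1 ω, Y2 ω))) :=
    Hd_comp p (fun ω => (U1 ω, (X ω, (Y1 ω, Y2 ω)))) (fun t => ((t.2.1, (t.2.2.1, t.1)), t.2.2.2))
      (by intro t t' h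
          simp only [Prod.mk.injEq] at h
          simp only [Prod.ext_iff]
          tauto)
  have e7 : (Hd p fun ω => (U2 ω, ((X ω, (Y1 ω, U1 ω)), Y2 ω))) = Hd p fun ω => (U1 ω, (U2 ω, (X ω, (Y1 ω, Y2 ω)))) :=
    Hd_comp p (fun ω => (U1 ω, (U2 ω, (X ω, (Y1 ω, Y2 ω))))) (fun t => (t.2.1, ((t.2.2.1, (t.2.2.2.1, t.1)), t.2.2.2.2)))
      (by intro t t' h
          simp only [Prod.mk.injEq] at h
          simp only [Prod.ext_iff]
          tauto)
  have e8 : (Hd p fun ω => ((U1 ω, U2 ω), (Y1 ω, Y2 ω))) = Hd p fun ω => (U1 ω, (U2 ω, (Y1 ω, Y2 ω))) :=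
    Hd_comp p (fun ω => (U1 ω, (U2 ω, (Y1 ω, Y2 ω)))) (fun t => ((t.1, t.2.1), (t.2.2.1, t.2.2.2)))
      (by intro t t' h
          simp only [Prod.mk.injEq] at h
          simp only [Prod.ext_iff]
          tauto)
  have e9 : (Hd p fun ω => ((U1 ω, U2 ω), X ω)) = Hd p fun ω => (U1 ω, (U2 ω, X ω)) :=
    Hd_comp p (fun ω => (U1 ω, (U2 ω, X ω))) (fun t => ((t.1, t.2.1), t.2.2))
      (by intro t t' h
          simp only [Prod.mk.injEq] at h
          simp only [Prod.ext_iff]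
          tauto)
  have e10 : (Hd p fun ω => (U1 ω, (Y1 ω, X ω))) = Hd p fun ω => (U1 ω, (X ω, Y1 ω)) :=
    Hd_comp p (fun ω => (U1 ω, (X ω, Y1 ω))) (fun t => (t.1, (t.2.2, t.2.1)))
      (by intro t t' h
          simp only [Prod.mk.injEq] at h
          simp only [Prod.ext_iff]
          tauto)
  have e11 : (Hd p fun ω => (U2 ω, (Y2 ω, X ω))) = Hd p fun ω => (U2 ω, (X ω, Y2 ω)) :=
    Hd_comp p (fun ω => (U2 ω, (X ω, Y2 ω))) (fun t => (t.1, (t.2.2, t.2.1)))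
      (by intro t t' h
          simp only [Prod.mk.injEq] at h
          simp only [Prod.ext_iff]
          tauto)
  have e12 : (Hd p fun ω => (Y2 ω, Y1 ω)) = Hd p fun ω => (Y1 ω, Y2 ω) :=
    Hd_comp p (fun ω => (Y1 ω, Y2 ω)) (fun t => (t.2, t.1))
      (by intro t t' h
          simp only [Prod.mk.injEq] at h
          simp only [Prod.ext_iff]
          tauto)
  have e13 : (Hd p fun ω => (U1 ω, (Y2 ω, Y1 ω))) = Hd p fun ω => (U1 ω, (Y1 ω, Y2 ω)) :=
    Hd_comp p (fun ω => (U1 ω, (Y1 ω, Y2 ω))) (fun t => (t.1, (t.2.2, t.2.1)))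
      (by intro t t' h
          simp only [Prod.mk.injEq] at h
          simp only [Prod.ext_iff]
          tauto)
  have e14 : (Hd p fun ω => (Y2 ω, (X ω, Y1 ω))) = Hd p fun ω => (X ω, (Y1 ω, Y2 ω)) :=
    Hd_comp p (fun ω => (X ω, (Y1 ω, Y2 ω))) (fun t => (t.2.2, (t.1, t.2.1)))
      (by intro t t' h
          simp only [Prod.mk.injEq] at h
          simp only [Prod.ext_iff]
          tauto)
  have e15 : (Hd p fun ω => (U1 ω, (Y2 ω, (X ω, Y1 ω)))) = Hd p fun ω => (U1 ω, (X ω, (Y1 ω, Y2 ω))) :=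
    Hd_comp p (fun ω => (U1 ω, (X ω, (Y1 ω, Y2 ω)))) (fun t => (t.1, (t.2.2.2, (t.2.1, t.2.2.1))))
      (by intro t t' h
          simp only [Prod.mk.injEq] at h
          simp only [Prod.ext_iff]
          tauto)
  have e16 : (Hd p fun ω => (U2 ω, (U1 ω, (X ω, Y2 ω)))) = Hd p fun ω => (U1 ω, (U2 ω, (X ω, Y2 ω))) :=
    Hd_comp p (fun ω => (U1 ω, (U2 ω, (X ω, Y2 ω)))) (fun t => (t.2.1, (t.1, (t.2.2.1, t.2.2.2))))
      (by intro t t' h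
          simp only [Prod.mk.injEq] at h
          simp only [Prod.ext_iff]
          tauto)
  have e17 : (Hd p fun ω => (Y1 ω, (U1 ω, (X ω, Y2 ω)))) = Hd p fun ω => (U1 ω, (X ω, (Y1 ω, Y2 ω))) :=
    Hd_comp p (fun ω => (U1 ω, (X ω, (Y1 ω, Y2 ω)))) (fun t => (t.2.2.1, (t.1, (t.2.1, t.2.2.2))))
      (by intro t t' h
          simp only [Prod.mk.injEq] at h
          simp only [Prod.ext_iff]
          tauto)
  have e18 : (Hd p fun ω => (U2 ω, (Y1 ω, (U1 ω, (X ω, Y2 ω))))) = Hd p fun ω => (U1 ω, (U2 ω, (X ω, (Y1 ω, Y2 ω)))) :=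
    Hd_comp p (fun ω => (U1 ω, (U2 ω, (X ω, (Y1 ω, Y2 ω))))) (fun t => (t.2.1, (t.2.2.2.1, (t.1, (t.2.2.1, t.2.2.2.2)))))
      (by intro t t' h
          simp only [Prod.mk.injEq] at h
          simp only [Prod.ext_iff]
          tauto)
  have e19 : (Hd p fun ω => ((U1 ω, Y1 ω), Y2 ω)) = Hd p fun ω => (U1 ω, (Y1 ω, Y2 ω)) :=
    Hd_comp p (fun ω => (U1 ω, (Y1 ω, Y2 ω))) (fun t => ((t.1, t.2.1), t.2.2))
      (by intro t t' h
          simp only [Prod.mk.injEq] at h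
          simp only [Prod.ext_iff]
          tauto)
  have e20 : (Hd p fun ω => (U2 ω, ((U1 ω, Y1 ω), Y2 ω))) = Hd p fun ω => (U1 ω, (U2 ω, (Y1 ω, Y2 ω))) :=
    Hd_comp p (fun ω => (U1 ω, (U2 ω, (Y1 ω, Y2 ω)))) (fun t => (t.2.1, ((t.1, t.2.2.1), t.2.2.2)))
      (by intro t t' h
          simp only [Prod.mk.injEq] at h
          simp only [Prod.ext_iff]
          tauto)
  have e21 : (Hd p fun ω => (U2 ω, (U1 ω, (Y1 ω, Y2 ω)))) = Hd p fun ω => (U1 ω, (U2 ω, (Y1 ω, Y2 ω))) :=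
    Hd_comp p (fun ω => (U1 ω, (U2 ω, (Y1 ω, Y2 ω)))) (fun t => (t.2.1, (t.1, (t.2.2.1, t.2.2.2))))
      (by intro t t' h
          simp only [Prod.mk.injEq] at h
          simp only [Prod.ext_iff]
          tauto)
  have e22 : (Hd p fun ω => (X ω, (U1 ω, (Y1 ω, Y2 ω)))) = Hd p fun ω => (U1 ω, (X ω, (Y1 ω, Y2 ω))) :=
    Hd_comp p (fun ω => (U1 ω, (X ω, (Y1 ω, Y2 ω)))) (fun t => (t.2.1, (t.1, (t.2.2.1, t.2.2.2))))
      (by intro t t' h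
          simp only [Prod.mk.injEq] at h
          simp only [Prod.ext_iff]
          tauto)
  have e23 : (Hd p fun ω => (U2 ω, (X ω, (U1 ω, (Y1 ω, Y2 ω))))) = Hd p fun ω => (U1 ω, (U2 ω, (X ω, (Y1 ω, Y2 ω)))) :=
    Hd_comp p (fun ω => (U1 ω, (U2 ω, (X ω, (Y1 ω, Y2 ω))))) (fun t => (t.2.1, (t.2.2.1, (t.1, (t.2.2.2.1, t.2.2.2.2)))))
      (by intro t t' h
          simp only [Prod.mk.injEq] at h
          simp only [Prod.ext_iff]
          tauto)
  have e24 : (Hd p fun ω => (Y2 ω, (U1 ω, X ω))) = Hd p fun ω => (U1 ω, (X ω, Y2 ω)) :=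
    Hd_comp p (fun ω => (U1 ω, (X ω, Y2 ω))) (fun t => (t.2.2, (t.1, t.2.1)))
      (by intro t t' h
          simp only [Prod.mk.injEq] at h
          simp only [Prod.ext_iff]
          tauto)
  have e25 : (Hd p fun ω => (Y1 ω, (U1 ω, X ω))) = Hd p fun ω => (U1 ω, (X ω, Y1 ω)) :=
    Hd_comp p (fun ω => (U1 ω, (X ω, Y1 ω))) (fun t => (t.2.2, (t.1, t.2.1)))
      (by intro t t' h
          simp only [Prod.mk.injEq] at h
          simp only [Prod.ext_iff]
          tauto)
  have e26 : (Hd p fun ω => (Y2 ω, (Y1 ω, (U1 ω, X ω)))) = Hd p fun ω => (U1 ω, (X ω, (Y1 ω, Y2 ω))) :=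
    Hd_comp p (fun ω => (U1 ω, (X ω, (Y1 ω, Y2 ω)))) (fun t => (t.2.2.2, (t.2.2.1, (t.1, t.2.1))))
      (by intro t t' h
          simp only [Prod.mk.injEq] at h
          simp only [Prod.ext_iff]
          tauto)
  have e27 : (Hd p fun ω => (Y2 ω, (U2 ω, X ω))) = Hd p fun ω => (U2 ω, (X ω, Y2 ω)) :=
    Hd_comp p (fun ω => (U2 ω, (X ω, Y2 ω))) (fun t => (t.2.2, (t.1, t.2.1)))
      (by intro t t' h
          simp only [Prod.mk.injEq] at h
          simp only [Prod.ext_iff]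
          tauto)
  have e28 : (Hd p fun ω => (U1 ω, (Y2 ω, (U2 ω, X ω)))) = Hd p fun ω => (U1 ω, (U2 ω, (X ω, Y2 ω))) :=
    Hd_comp p (fun ω => (U1 ω, (U2 ω, (X ω, Y2 ω)))) (fun t => (t.1, (t.2.2.2, (t.2.1, t.2.2.1))))
      (by intro t t' h
          simp only [Prod.mk.injEq] at h
          simp only [Prod.ext_iff]
          tauto)
  have n1 : 0 ≤ CMId p U1 Y2 Y1 :=
    CMId_nonneg p hp hp1 _ _ _
  simp only [CMId] at n1
  have n2 : 0 ≤ CMId p U1 X (fun ω => (Y1 ω, Y2 ω)) :=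
    CMId_nonneg p hp hp1 _ _ _
  simp only [CMId] at n2
  have n3 : 0 ≤ CMId p U1 X Y1 :=
    CMId_nonneg p hp hp1 _ _ _
  simp only [CMId] at n3
  have n4 : 0 ≤ CMId p U1 Y2 (fun ω => (X ω, Y1 ω)) :=
    CMId_nonneg p hp hp1 _ _ _
  simp only [CMId] at n4
  have n5 : 0 ≤ CMId p U2 X Y2 :=
    CMId_nonneg p hp hp1 _ _ _
  simp only [CMId] at n5
  have n6 : 0 ≤ CMId p U2 U1 (fun ω => (X ω, Y2 ω)) :=
    CMId_nonneg p hp hp1 _ _ _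
  simp only [CMId] at n6
  have n7 : 0 ≤ CMId p U2 Y1 (fun ω => (U1 ω, (X ω, Y2 ω))) :=
    CMId_nonneg p hp hp1 _ _ _
  simp only [CMId] at n7
  have n8 : 0 ≤ CMId p U2 (fun ω => (U1 ω, Y1 ω)) Y2 :=
    CMId_nonneg p hp hp1 _ _ _
  simp only [CMId] at n8
  have n9 : 0 ≤ CMId p U2 X (fun ω => (U1 ω, (Y1 ω, Y2 ω))) :=
    CMId_nonneg p hp hp1 _ _ _
  simp only [CMId] at n9
  have n10 : 0 ≤ CMId p Y2 U1 X :=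
    CMId_nonneg p hp hp1 _ _ _
  simp only [CMId] at n10
  have n11 : 0 ≤ CMId p Y2 Y1 (fun ω => (U1 ω, X ω)) :=
    CMId_nonneg p hp hp1 _ _ _
  simp only [CMId] at n11
  have n12 : 0 ≤ CMId p U1 U2 X :=
    CMId_nonneg p hp hp1 _ _ _
  simp only [CMId] at n12
  have n13 : 0 ≤ CMId p U1 Y2 (fun ω => (U2 ω, X ω)) :=
    CMId_nonneg p hp hp1 _ _ _
  simp only [CMId] at n13
  linarith [e1, e2, e3, e4, e5, e6, e7, e8, e9, e10, e11, e12, e13, e14, e15, e16, e17, e18, e19, e20, e21, e22, e23, e24, e25, e26, e27, e28, n1, n2, n3, n4, n5, n6, n7, n8, n9, n10, n11, n12, n13, hM1, hM2, hM3]
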